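/- arXiv:0904.1458 — 2 statements merged into one kernel-verified Lean document; each statement's English description precedes it below -/
import Mathlib

section
/- Let X be a compact metrizable space, K, L disjoint compact subsets of X, and suppose Y is strongly contractible at y ∈ Y. Then there exists a homotopy sₜ : C(X,Y) → C(X,Y) (compact-open topology), t ∈ [0,1], such that for every f ∈ C(X,Y): s₀(f) = f; s₁(f)(L) = {y}; sₜ(f)|K = f|K for all t; and if f(x) = y then sₜ(f)(x) = y for all t. -/
/-- A space `Y` is strongly contractible at `y` if `Y` contracts to `y` in
itself keeping `y` fixed throughout the homotopy. -/
def StronglyContractibleAt {Y : Type*} [TopologicalSpace Y] (y : Y) : Prop :=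
  ∃ H : Y × unitInterval → Y, Continuous H ∧ (∀ z, H (z, 0) = z) ∧
    (∀ z, H (z, 1) = y) ∧ ∀ t, H (y, t) = y

/-- for X compact metrizable, K, L disjoint compact subsets and Y
strongly contractible at y, there is a homotopy `sₜ` of `C(X,Y)` (compact-open
topology) with `s₀(f) = f`, `s₁(f)(L) = {y}`, `sₜ(f)|K = f|K` for all `t`, and
`sₜ(f)(x) = y` whenever `f(x) = y`. -/
theorem stmt15 {X : Type*} [TopologicalSpace X] [CompactSpace X]
    [TopologicalSpace.MetrizableSpace X]
    {Y : Type*} [TopologicalSpace Y] {y : Y} (hY : StronglyContractibleAt y)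
    (K L : Set X) (hK : IsCompact K) (hL : IsCompact L) (hKL : Disjoint K L) :
    ∃ S : C(C(X, Y) × unitInterval, C(X, Y)),
      (∀ f : C(X, Y), S (f, 0) = f) ∧
      (∀ f : C(X, Y), ∀ l ∈ L, S (f, 1) l = y) ∧
      (∀ (f : C(X, Y)) (t : unitInterval), ∀ k ∈ K, S (f, t) k = f k) ∧
      (∀ (f : C(X, Y)) (t : unitInterval) (x : X), f x = y → S (f, t) x = y) := by
  obtain ⟨H, Hc, H0, H1, Hy⟩ := hY
  letI := TopologicalSpace.metrizableSpaceMetric X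
  obtain ⟨lam, hl0, hl1, hmem⟩ :=
    exists_continuous_zero_one_of_isClosed hK.isClosed hL.isClosed hKL
  set lamI : X → unitInterval := fun x => ⟨lam x, hmem x⟩ with hlamI
  have hlamIc : Continuous lamI := Continuous.subtype_mk lam.continuous _
  have hΦ : Continuous (fun p : (C(X, Y) × unitInterval) × X =>
      H (p.1.1 p.2, lamI p.2 * p.1.2)) := by
    apply Hc.comp
    apply Continuous.prodMk
    · exact continuous_eval.comp
        (continuous_fst.fst.prodMk continuous_snd)
    · apply Continuous.subtype_mk
      exact ((continuous_subtype_val.comp (hlamIc.comp continuous_snd)).mul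
        (continuous_subtype_val.comp continuous_fst.snd))
  refine ⟨(ContinuousMap.mk _ hΦ).curry, ?_, ?_, ?_, ?_⟩
  · intro f
    ext x
    have : lamI x * (0 : unitInterval) = 0 := by
      ext; exact mul_zero _
    simp [ContinuousMap.curry, this, H0]
  · intro f l hl
    have : lamI l * (1 : unitInterval) = 1 := by
      ext; simp [hlamI, hl1 hl]
    simp [ContinuousMap.curry, this, H1]
  · intro f t k hk
    have : lamI k * t = 0 := by
      ext; simp [hlamI, hl0 hk]
    simp [ContinuousMap.curry, this, H0]
  · intro f t x hx
    simp [ContinuousMap.curry, hx, Hy]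
end

section
/- Let X be a locally compact σ-compact Hausdorff space, G a topological group, and ℒ = (Lᵢ)ᵢ∈ℕ a discrete family of compact subsets of X with union L. Then the map λ_ℒ : ⊡ᵢ 𝒢(Lᵢ) → 𝒢_c(L), sending a sequence (fᵢ) (all but finitely many equal to the constant ê) to the map that agrees with fᵢ on Lᵢ and equals e off L, is a well-defined bijective group homomorphism, where 𝒢(N) = {f ∈ C(X,G) : supp(f) ⊆ N} and 𝒢_c(L) = {f ∈ C_c(X,G) : supp(f) ⊆ L}. -/
open Function Set

variable {X G : Type*} [TopologicalSpace X] [TopologicalSpace G] [Group G]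
  [IsTopologicalGroup G]

/-- The subgroup `𝒢(N) = {f ∈ C(X,G) : supp(f) ⊆ N}` of maps with support
(closure of `{x | f x ≠ e}`) contained in `N`. -/
def suppIn (X : Type*) (G : Type*) [TopologicalSpace X] [TopologicalSpace G]
    [Group G] [IsTopologicalGroup G] (N : Set X) : Subgroup C(X, G) where
  carrier := {f : C(X, G) | mulTSupport ⇑f ⊆ N}
  one_mem' := by
    simp only [Set.mem_setOf_eq, ContinuousMap.coe_one]
    rw [mulTSupport]
    simp [Function.mulSupport_one]
  mul_mem' := by
    intro a b ha hb
    simp only [Set.mem_setOf_eq, ContinuousMap.coe_mul] at *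
    refine (closure_mono (Function.mulSupport_mul ⇑a ⇑b)).trans ?_
    rw [closure_union]
    exact Set.union_subset ha hb
  inv_mem' := by
    intro a ha
    simp only [Set.mem_setOf_eq, ContinuousMap.coe_inv] at *
    have : Function.mulSupport (⇑a)⁻¹ = Function.mulSupport ⇑a := by
      ext x; simp [Function.mulSupport, Pi.inv_apply]
    rwa [mulTSupport, this, ← mulTSupport]

/-- The small box product of a tower of subgroups: sequences that are
eventually the identity. -/
abbrev SmallBox {H : Type*} [Group H] (K : ℕ → Subgroup H) : Type _ :=
  {x : ∀ i, K i // ∃ N, ∀ i ≥ N, x i = 1}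

/-- Coordinatewise multiplication on the small box product. -/
instance {H : Type*} [Group H] (K : ℕ → Subgroup H) : Mul (SmallBox K) :=
  ⟨fun x y => ⟨x.1 * y.1, by
    obtain ⟨N, hN⟩ := x.2
    obtain ⟨M, hM⟩ := y.2
    exact ⟨max N M, fun i hi => by
      have h1 := hN i (le_trans (le_max_left _ _) hi)
      have h2 := hM i (le_trans (le_max_right _ _) hi)
      simp [Pi.mul_apply, h1, h2]⟩⟩⟩


section Stmt17Aux

lemma listProd_eq_of {G : Type*} [Group G] (g : ℕ → G) (i : ℕ)
    (h : ∀ j, j ≠ i → g j = 1) (M : ℕ) :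
    ((List.range M).map g).prod = if i < M then g i else 1 := by
  induction M with
  | zero => simp
  | succ M ih =>
    rw [List.range_succ, List.map_append, List.prod_append, ih]
    simp only [List.map_cons, List.map_nil, List.prod_cons, List.prod_nil, mul_one]
    rcases lt_trichotomy i M with h1 | h1 | h1
    · rw [if_pos h1, if_pos (h1.trans (Nat.lt_succ_self M)), h M (by omega), mul_one]
    · subst h1
      rw [if_neg (lt_irrefl _), one_mul, if_pos (Nat.lt_succ_self _)]
    · rw [if_neg (by omega), h M (by omega), mul_one, if_neg (by omega)]

/-- Evaluation at a point as a monoid hom. -/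
def stmt17evalHom (x : X) : C(X, G) →* G where
  toFun f := f x
  map_one' := rfl
  map_mul' _ _ := rfl

/-- The underlying continuous map of `λ_ℒ F`: the (finite) product of the
coordinates of `F`. -/
noncomputable def boxProd (L : ℕ → Set X) (F : SmallBox (fun i => suppIn X G (L i))) : C(X, G) :=
  ((List.range F.2.choose).map (fun j => (F.1 j : C(X, G)))).prod

lemma boxProd_apply (L : ℕ → Set X) (F : SmallBox (fun i => suppIn X G (L i))) (x : X) :
    boxProd L F x = ((List.range F.2.choose).map (fun j => (F.1 j : C(X, G)) x)).prod := by
  have : boxProd L F x = stmt17evalHom x (boxProd L F) := rfl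
  rw [this, boxProd, map_list_prod, List.map_map]
  rfl

lemma mem_suppIn {N : Set X} {f : C(X, G)} (h : f ∈ suppIn X G N) :
    mulTSupport ⇑f ⊆ N := h

lemma boxProd_apply_of_mem (L : ℕ → Set X)
    (hdisj : ∀ i j, i ≠ j → ∀ ⦃x : X⦄, x ∈ L i → x ∈ L j → False)
    (F : SmallBox (fun i => suppIn X G (L i))) (i : ℕ) (x : X) (hx : x ∈ L i) :
    boxProd L F x = (F.1 i : C(X, G)) x := by
  rw [boxProd_apply]
  have h : ∀ j, j ≠ i → ((F.1 j : C(X, G)) x) = 1 := by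
    intro j hj
    by_contra hne
    exact hdisj j i hj (mem_suppIn (F.1 j).2 (subset_mulTSupport _ hne)) hx
  rw [listProd_eq_of _ i h]
  split
  · rfl
  · next hlt =>
    have h1 : F.1 i = 1 := F.2.choose_spec i (by omega)
    rw [h1]
    simp

lemma boxProd_apply_of_not_mem (L : ℕ → Set X)
    (F : SmallBox (fun i => suppIn X G (L i))) (x : X) (hx : x ∉ ⋃ i, L i) :
    boxProd L F x = 1 := by
  rw [boxProd_apply]
  apply List.prod_eq_one
  intro a ha
  simp only [List.mem_map, List.mem_range] at ha
  obtain ⟨j, _, rfl⟩ := ha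
  by_contra hne
  exact hx (Set.mem_iUnion.2 ⟨j, mem_suppIn (F.1 j).2 (subset_mulTSupport _ hne)⟩)

lemma boxProd_tsupport (L : ℕ → Set X) [T2Space X] (hcpt : ∀ i, IsCompact (L i))
    (F : SmallBox (fun i => suppIn X G (L i))) :
    IsCompact (mulTSupport ⇑(boxProd L F)) ∧ mulTSupport ⇑(boxProd L F) ⊆ ⋃ i, L i := by
  set N := F.2.choose with hN
  have hCc : IsCompact (⋃ j ∈ Finset.range N, L j) :=
    (Finset.range N).finite_toSet.isCompact_biUnion (fun j _ => hcpt j)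
  have hsub : mulTSupport ⇑(boxProd L F) ⊆ ⋃ j ∈ Finset.range N, L j := by
    apply closure_minimal _ hCc.isClosed
    intro x hx
    simp only [mulSupport, Set.mem_setOf_eq] at hx
    by_contra hxC
    apply hx
    rw [boxProd_apply]
    apply List.prod_eq_one
    intro a ha
    simp only [List.mem_map, List.mem_range] at ha
    obtain ⟨j, hj, rfl⟩ := ha
    by_contra hne
    exact hxC (Set.mem_biUnion (Finset.mem_range.2 hj)
      (mem_suppIn (F.1 j).2 (subset_mulTSupport _ hne)))
  refine ⟨hCc.of_isClosed_subset (isClosed_mulTSupport _) hsub, hsub.trans ?_⟩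
  exact Set.iUnion₂_subset fun j _ => Set.subset_iUnion L j

end Stmt17Aux

/-- for a discrete family `ℒ = (Lᵢ)` of compact subsets of a
locally compact σ-compact Hausdorff space X with union L, the map
`λ_ℒ : ⊡ᵢ 𝒢(Lᵢ) → 𝒢_c(L)`, sending `(fᵢ)` to the map agreeing with `fᵢ` on
`Lᵢ` and equal to `e` off `L`, is a well-defined bijective group
homomorphism. -/
theorem stmt17 [T2Space X] [LocallyCompactSpace X] [SigmaCompactSpace X]
    (L : ℕ → Set X) (hcpt : ∀ i, IsCompact (L i))
    (hdisc : ∀ x : X, ∃ U ∈ nhds x, {i : ℕ | (U ∩ L i).Nonempty}.Subsingleton) :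
    ∃ lam : SmallBox (fun i => suppIn X G (L i)) →
        {f : C(X, G) // IsCompact (mulTSupport ⇑f) ∧ mulTSupport ⇑f ⊆ ⋃ i, L i},
      (∀ F, ∀ i, ∀ x ∈ L i, ((lam F : C(X, G)) x = ((F.1 i : C(X, G)) x))) ∧
      (∀ F, ∀ x ∉ ⋃ i, L i, (lam F : C(X, G)) x = 1) ∧
      Function.Bijective lam ∧
      (∀ F F' : SmallBox (fun i => suppIn X G (L i)),
        ((lam (F * F') : C(X, G))) = (lam F : C(X, G)) * (lam F' : C(X, G))) := by
  classical
  have hdisj : ∀ i j, i ≠ j → ∀ ⦃x : X⦄, x ∈ L i → x ∈ L j → False := by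
    intro i j hij x hi hj
    obtain ⟨U, hU, hsub⟩ := hdisc x
    have hxU : x ∈ U := mem_of_mem_nhds hU
    exact hij (hsub ⟨x, hxU, hi⟩ ⟨x, hxU, hj⟩)
  have hLcl : ∀ i, IsClosed (L i) := fun i => (hcpt i).isClosed
  have hnbhd : ∀ (i : ℕ) (x : X), (∀ j, j ≠ i → x ∉ L j) →
      ∃ V ∈ nhds x, ∀ j, j ≠ i → ∀ y ∈ V, y ∉ L j := by
    intro i x hx
    obtain ⟨U, hU, hsub⟩ := hdisc x
    have hxW : x ∈ interior U := mem_interior_iff_mem_nhds.2 hU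
    by_cases h : ∃ j₀, j₀ ≠ i ∧ (interior U ∩ L j₀).Nonempty
    · obtain ⟨j₀, hj₀i, hj₀⟩ := h
      refine ⟨interior U \ L j₀, (isOpen_interior.sdiff (hLcl j₀)).mem_nhds
        ⟨hxW, hx j₀ hj₀i⟩, ?_⟩
      intro j hj y hy hyL
      have h1 : (U ∩ L j).Nonempty := ⟨y, interior_subset hy.1, hyL⟩
      have h2 : (U ∩ L j₀).Nonempty :=
        ⟨hj₀.choose, interior_subset hj₀.choose_spec.1, hj₀.choose_spec.2⟩
      exact hy.2 (hsub h1 h2 ▸ hyL)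
    · refine ⟨interior U, isOpen_interior.mem_nhds hxW, ?_⟩
      intro j hj y hy hyL
      exact h ⟨j, hj, ⟨y, hy, hyL⟩⟩
  refine ⟨fun F => ⟨boxProd L F, boxProd_tsupport L hcpt F⟩, ?_, ?_, ⟨?_, ?_⟩, ?_⟩
  · intro F i x hx
    exact boxProd_apply_of_mem L hdisj F i x hx
  · intro F x hx
    exact boxProd_apply_of_not_mem L F x hx
  · -- injective
    intro F F' hFF
    have heq : boxProd L F = boxProd L F' := congrArg Subtype.val hFF
    apply Subtype.ext
    funext i
    apply Subtype.ext
    ext x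
    show (F.1 i : C(X, G)) x = (F'.1 i : C(X, G)) x
    by_cases hx : x ∈ L i
    · rw [← boxProd_apply_of_mem L hdisj F i x hx,
        ← boxProd_apply_of_mem L hdisj F' i x hx, heq]
    · have h1 : (F.1 i : C(X, G)) x = 1 := by
        by_contra hne
        exact hx (mem_suppIn (F.1 i).2 (subset_mulTSupport _ hne))
      have h2 : (F'.1 i : C(X, G)) x = 1 := by
        by_contra hne
        exact hx (mem_suppIn (F'.1 i).2 (subset_mulTSupport _ hne))
      rw [h1, h2]
  · -- surjective
    rintro ⟨f, hKc, hKs⟩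
    set P : ℕ → X → Prop := fun i x => ∀ j, j ≠ i → x ∉ L j with hP
    have hfsupp : ∀ x : X, f x ≠ 1 → ∃ j, x ∈ L j := fun x hx =>
      Set.mem_iUnion.1 (hKs (subset_mulTSupport _ hx))
    have hcont : ∀ i, Continuous (fun x => if P i x then f x else 1 : X → G) := by
      intro i
      rw [continuous_iff_continuousAt]
      intro x
      by_cases hx : x ∈ L i
      · have hPx : P i x := fun j hj hxj => hdisj j i hj hxj hx
        obtain ⟨V, hV, hVp⟩ := hnbhd i x hPx
        apply f.continuous.continuousAt.congr
        filter_upwards [hV] with y hy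
        rw [if_pos (fun j hj => hVp j hj y hy)]
      · apply continuousAt_const.congr
        filter_upwards [(hLcl i).isOpen_compl.mem_nhds hx] with y hy
        by_cases hPy : P i y
        · rw [if_pos hPy]
          by_contra hne
          obtain ⟨j, hj⟩ := hfsupp y (fun h => hne h.symm)
          by_cases hji : j = i
          · exact hy (hji ▸ hj)
          · exact hPy j hji hj
        · rw [if_neg hPy]
    set g : ℕ → C(X, G) := fun i => ⟨fun x => if P i x then f x else 1, hcont i⟩ with hg
    have hgne : ∀ i x, g i x ≠ 1 → x ∈ L i ∧ f x ≠ 1 := by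
      intro i x h
      by_cases hPx : P i x
      · have hfx : f x ≠ 1 := by
          intro h1
          exact h (by show (if P i x then f x else 1) = 1; rw [if_pos hPx, h1])
        obtain ⟨j, hj⟩ := hfsupp x hfx
        by_cases hji : j = i
        · exact ⟨hji ▸ hj, hfx⟩
        · exact absurd hj (hPx j hji)
      · exact absurd (by show (if P i x then f x else 1) = 1; rw [if_neg hPx]) h
    have hgsupp : ∀ i, g i ∈ suppIn X G (L i) := by
      intro i
      show mulTSupport ⇑(g i) ⊆ L i
      apply closure_minimal _ (hLcl i)
      intro x hx
      exact (hgne i x hx).1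
    have hfin : {i | (L i ∩ mulTSupport ⇑f).Nonempty}.Finite := by
      choose U hU hUsub using hdisc
      obtain ⟨t, ht⟩ := hKc.elim_finite_subcover
        (fun x : mulTSupport ⇑f => interior (U x.1)) (fun x => isOpen_interior)
        (fun y hy => Set.mem_iUnion.2 ⟨⟨y, hy⟩, mem_interior_iff_mem_nhds.2 (hU y)⟩)
      apply Set.Finite.subset (Set.Finite.biUnion t.finite_toSet
        (fun x _ => (hUsub x.1).finite))
      rintro i ⟨y, hyL, hyK⟩
      obtain ⟨x, hx, hyU⟩ := Set.mem_iUnion₂.1 (ht hyK)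
      exact Set.mem_biUnion hx ⟨y, interior_subset hyU, hyL⟩
    obtain ⟨N, hN⟩ := hfin.bddAbove
    have hg1 : ∀ i ≥ N + 1, g i = 1 := by
      intro i hi
      ext x
      show g i x = 1
      by_contra hne
      obtain ⟨hxL, hfx⟩ := hgne i x hne
      have hiS : i ∈ {i | (L i ∩ mulTSupport ⇑f).Nonempty} :=
        ⟨x, hxL, subset_mulTSupport _ hfx⟩
      have := hN hiS
      omega
    refine ⟨⟨fun i => ⟨g i, hgsupp i⟩, N + 1, fun i hi => Subtype.ext (hg1 i hi)⟩, ?_⟩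
    apply Subtype.ext
    ext x
    show boxProd L _ x = f x
    by_cases hx : x ∈ ⋃ i, L i
    · obtain ⟨i, hi⟩ := Set.mem_iUnion.1 hx
      rw [boxProd_apply_of_mem L hdisj _ i x hi]
      show (if P i x then f x else 1) = f x
      rw [if_pos (fun j hj hxj => hdisj j i hj hxj hi)]
    · rw [boxProd_apply_of_not_mem L _ x hx]
      have hfx : f x = 1 := by
        by_contra hne
        obtain ⟨j, hj⟩ := hfsupp x hne
        exact hx (Set.mem_iUnion.2 ⟨j, hj⟩)
      exact hfx.symm
  · -- homomorphism
    intro F F'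
    ext x
    show boxProd L (F * F') x = boxProd L F x * boxProd L F' x
    by_cases hx : x ∈ ⋃ i, L i
    · obtain ⟨i, hi⟩ := Set.mem_iUnion.1 hx
      rw [boxProd_apply_of_mem L hdisj _ i x hi, boxProd_apply_of_mem L hdisj F i x hi,
        boxProd_apply_of_mem L hdisj F' i x hi]
      rfl
    · rw [boxProd_apply_of_not_mem L _ x hx, boxProd_apply_of_not_mem L F x hx,
        boxProd_apply_of_not_mem L F' x hx, one_mul]
end
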